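/- Folded-kernel decomposition of the dominance inequality: for σ > 0, s' ≥ s ≥ 0, and r ≥ 0, one has ∫_r^∞ e^{-(v-s')²/(2σ²)} dv + ∫_r^∞ e^{-(v+s')²/(2σ²)} dv - ∫_r^∞ e^{-(v-s)²/(2σ²)} dv - ∫_r^∞ e^{-(v+s)²/(2σ²)} dv = ∫_{(r-s')/σ}^{(r-s)/σ} e^{-z²/2}σ dz - ∫_{(r+s)/σ}^{(r+s')/σ} e^{-z²/2}σ dz ≥ 0, since the Gaussian density is even and unimodal and the two integration intervals have equal length |s'-s|/σ with the first interval closer to the origin. -/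

import Mathlib

open MeasureTheory Real Set intervalIntegral

private lemma gauss_integrable (σ : ℝ) :
    Integrable (fun z : ℝ => Real.exp (-z^2 / 2) * σ) := by
  have h : (fun z : ℝ => Real.exp (-z^2 / 2) * σ)
      = fun z : ℝ => Real.exp (-(1/2) * z^2) * σ := by
    ext z; ring_nf
  rw [h]
  exact (integrable_exp_neg_mul_sq (by norm_num)).mul_const σ

private lemma Ioi_sub_Ioi (g : ℝ → ℝ) (hg : Integrable g) {A B : ℝ} (hAB : A ≤ B) :
    (∫ x in Set.Ioi A, g x) - ∫ x in Set.Ioi B, g x = ∫ x in A..B, g x := by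
  have h : (∫ x in Set.Ioi A, g x)
      = (∫ x in Set.Ioc A B, g x) + ∫ x in Set.Ioi B, g x := by
    rw [← setIntegral_union (Ioc_disjoint_Ioi le_rfl) measurableSet_Ioi
      hg.integrableOn hg.integrableOn, Ioc_union_Ioi_eq_Ioi hAB]
  rw [h, intervalIntegral.integral_of_le hAB]; ring

private lemma Ioi_comp_sub (f : ℝ → ℝ) (a c : ℝ) :
    (∫ v in Set.Ioi a, f (v - c)) = ∫ v in Set.Ioi (a - c), f v := by
  rw [← MeasureTheory.integral_indicator (measurableSet_Ioi (a := a)),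
      ← MeasureTheory.integral_indicator (measurableSet_Ioi (a := a - c))]
  rw [← MeasureTheory.integral_sub_right_eq_self ((Set.Ioi (a - c)).indicator f) c]
  congr 1; ext x
  simp only [Set.indicator_apply, Set.mem_Ioi, sub_lt_sub_iff_right]

private lemma tail_eq (σ : ℝ) (hσ : 0 < σ) (r c : ℝ) :
    (∫ v in Set.Ioi r, Real.exp (-(v - c)^2 / (2 * σ^2)))
      = ∫ z in Set.Ioi ((r - c) / σ), Real.exp (-z^2 / 2) * σ := by
  have h1 : ∀ v : ℝ, Real.exp (-(v - c)^2 / (2 * σ^2))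
      = Real.exp (-((v - c) / σ)^2 / 2) := by
    intro v; congr 1; rw [div_pow]; ring
  simp_rw [h1]
  rw [Ioi_comp_sub (fun v => Real.exp (-(v / σ)^2 / 2)) r c]
  have h2 : ∀ v : ℝ, Real.exp (-(v / σ)^2 / 2) = Real.exp (-(σ⁻¹ * v)^2 / 2) := by
    intro v; rw [inv_mul_eq_div]
  simp_rw [h2]
  rw [MeasureTheory.integral_comp_mul_left_Ioi (fun z => Real.exp (-z^2 / 2)) _
    (inv_pos.mpr hσ)]
  rw [inv_inv, inv_mul_eq_div, smul_eq_mul, ← MeasureTheory.integral_const_mul]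
  congr 1; ext z; ring

theorem stmt_19 (σ : ℝ) (hσ : 0 < σ) (s s' : ℝ) (hs : 0 ≤ s) (hss' : s ≤ s')
    (r : ℝ) (hr : 0 ≤ r) :
    ((∫ v in Set.Ioi r, Real.exp (-(v - s')^2 / (2 * σ^2)))
      + (∫ v in Set.Ioi r, Real.exp (-(v + s')^2 / (2 * σ^2)))
      - (∫ v in Set.Ioi r, Real.exp (-(v - s)^2 / (2 * σ^2)))
      - (∫ v in Set.Ioi r, Real.exp (-(v + s)^2 / (2 * σ^2)))
      = (∫ z in ((r - s') / σ)..((r - s) / σ), Real.exp (-z^2 / 2) * σ)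
        - (∫ z in ((r + s) / σ)..((r + s') / σ), Real.exp (-z^2 / 2) * σ)) ∧
    0 ≤ (∫ z in ((r - s') / σ)..((r - s) / σ), Real.exp (-z^2 / 2) * σ)
        - (∫ z in ((r + s) / σ)..((r + s') / σ), Real.exp (-z^2 / 2) * σ) := by
  set g : ℝ → ℝ := fun z => Real.exp (-z^2 / 2) * σ with hg
  have hgint : Integrable g := gauss_integrable σ
  have hgcont : Continuous g := by
    fun_prop
  constructor
  · have e1 : (∫ v in Set.Ioi r, Real.exp (-(v - s')^2 / (2 * σ^2)))
        = ∫ z in Set.Ioi ((r - s') / σ), g z := tail_eq σ hσ r s'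
    have e3 : (∫ v in Set.Ioi r, Real.exp (-(v - s)^2 / (2 * σ^2)))
        = ∫ z in Set.Ioi ((r - s) / σ), g z := tail_eq σ hσ r s
    have e2 : (∫ v in Set.Ioi r, Real.exp (-(v + s')^2 / (2 * σ^2)))
        = ∫ z in Set.Ioi ((r + s') / σ), g z := by
      have := tail_eq σ hσ r (-s')
      simp_rw [sub_neg_eq_add] at this
      exact this
    have e4 : (∫ v in Set.Ioi r, Real.exp (-(v + s)^2 / (2 * σ^2)))
        = ∫ z in Set.Ioi ((r + s) / σ), g z := by
      have := tail_eq σ hσ r (-s)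
      simp_rw [sub_neg_eq_add] at this
      exact this
    rw [e1, e2, e3, e4,
      ← Ioi_sub_Ioi g hgint ((div_le_div_iff_of_pos_right hσ).mpr (by linarith)),
      ← Ioi_sub_Ioi g hgint ((div_le_div_iff_of_pos_right hσ).mpr (by linarith))]
    ring
  · set A' : ℝ := (r - s') / σ
    set A : ℝ := (r - s) / σ
    set d : ℝ := (s + s') / σ with hd
    have hd0 : 0 ≤ d := div_nonneg (by linarith) hσ.le
    have hAA' : A' ≤ A := (div_le_div_iff_of_pos_right hσ).mpr (by linarith)
    have hB : (r + s) / σ = A' + d := by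
      show (r + s) / σ = (r - s') / σ + (s + s') / σ
      rw [← add_div]; congr 1; ring
    have hB' : (r + s') / σ = A + d := by
      show (r + s') / σ = (r - s) / σ + (s + s') / σ
      rw [← add_div]; congr 1; ring
    have hshift : (∫ z in ((r + s) / σ)..((r + s') / σ), g z)
        = ∫ x in A'..A, g (x + d) := by
      rw [_root_.intervalIntegral.integral_comp_add_right g d, hB, hB']
    rw [hshift]
    have hint1 : IntervalIntegrable g volume A' A := hgcont.intervalIntegrable _ _
    have hint2 : IntervalIntegrable (fun x => g (x + d)) volume A' A :=
      (hgcont.comp (by continuity)).intervalIntegrable _ _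
    rw [← _root_.intervalIntegral.integral_sub hint1 hint2]
    set ψ : ℝ → ℝ := fun x => g x - g (x + d) with hψ
    have hψcont : Continuous ψ := hgcont.sub (hgcont.comp (by continuity))
    have hψpt : ∀ x : ℝ, -d/2 ≤ x → 0 ≤ ψ x := by
      intro x hx
      have : (x)^2 ≤ (x + d)^2 := by nlinarith
      have hle : Real.exp (-(x+d)^2 / 2) ≤ Real.exp (-x^2 / 2) := by
        apply Real.exp_le_exp.mpr; linarith
      simp only [ψ, g]
      nlinarith [hσ.le]
    by_cases hcase : -d/2 ≤ A'
    · apply _root_.intervalIntegral.integral_nonneg hAA'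
      intro x hx
      exact hψpt x (le_trans hcase hx.1)
    · push_neg at hcase
      set M : ℝ := -d - A' with hM
      have hA'M : A' ≤ M := by simp only [hM]; linarith
      have hMval : M = (-s - r) / σ := by
        rw [hM]
        show -((s + s') / σ) - (r - s') / σ = (-s - r) / σ
        field_simp; ring
      have hMA : M ≤ A := by
        rw [hMval]
        exact (div_le_div_iff_of_pos_right hσ).mpr (by linarith)
      have hsplit : (∫ x in A'..A, ψ x)
          = (∫ x in A'..M, ψ x) + ∫ x in M..A, ψ x :=
        (_root_.intervalIntegral.integral_add_adjacent_intervals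
          (hψcont.intervalIntegrable _ _) (hψcont.intervalIntegrable _ _)).symm
      have hzero : (∫ x in A'..M, ψ x) = 0 := by
        have hodd : ∀ x : ℝ, ψ (-d - x) = -ψ x := by
          intro x
          simp only [ψ, g]
          have h1 : (-d - x)^2 = (x + d)^2 := by ring
          have h2 : (-d - x + d)^2 = x^2 := by ring
          rw [h1, h2]; ring
        have := _root_.intervalIntegral.integral_comp_sub_left ψ (-d) (a := A') (b := M)
        simp_rw [hodd] at this
        rw [_root_.intervalIntegral.integral_neg] at this
        have hMe : -d - M = A' := by simp [hM]
        have hA'e : -d - A' = M := hM.symm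
        rw [hMe, hA'e] at this
        linarith
      have hpos : 0 ≤ ∫ x in M..A, ψ x := by
        apply _root_.intervalIntegral.integral_nonneg hMA
        intro x hx
        apply hψpt x
        have : -d/2 ≤ M := by simp only [hM]; linarith
        linarith [hx.1]
      rw [hsplit, hzero]; linarith
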